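/- Let π = (n−1, d_2, …, d_n) be a nonincreasing graphic sequence whose largest term is n−1, and let π_1 = (d_2−1, …, d_n−1) be the sequence obtained by laying off the first term. Then for any graph G, π_1 is potentially G-graphic if and only if π is potentially (K_1 ∨ G)-graphic; consequently, for any graph H, π is potentially H-graphic if and only if π_1 is potentially D^(1)(H)-graphic. -/

import Mathlib

open SimpleGraph

/-- The degree of a vertex, defined without decidability assumptions. -/
noncomputable def gdeg {V : Type*} [Fintype V] (G : SimpleGraph V) (v : V) : ℕ :=
  {w | G.Adj v w}.ncard

/-- The multiset of vertex degrees of a finite simple graph. -/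
noncomputable def degMultiset {V : Type*} [Fintype V] (G : SimpleGraph V) : Multiset ℕ :=
  Finset.univ.val.map (gdeg G)

/-- A finite sequence of naturals is *graphic* if it is the degree sequence of
a finite simple graph (a *realization*). -/
def IsGraphic (π : List ℕ) : Prop :=
  ∃ G : SimpleGraph (Fin π.length), degMultiset G = (π : Multiset ℕ)

/-- `H` is contained in `G` as a (not necessarily induced) subgraph. -/
def ContainsSub {V : Type*} {W : Type*} (H : SimpleGraph V) (G : SimpleGraph W) : Prop :=
  ∃ f : V → W, Function.Injective f ∧ ∀ ⦃a b⦄, H.Adj a b → G.Adj (f a) (f b)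

/-- `π` is *potentially `H`-graphic*: some realization of `π` contains `H` as a subgraph. -/
def PotentiallyGraphic {V : Type*} (H : SimpleGraph V) (π : List ℕ) : Prop :=
  ∃ G : SimpleGraph (Fin π.length), degMultiset G = (π : Multiset ℕ) ∧ ContainsSub H G

/-- The potential number `σ(H,n)`: the minimum even integer such that every
(nonincreasing) graphic sequence of length `n` with sum at least that integer is
potentially `H`-graphic. -/
noncomputable def potentialNumber {V : Type*} (H : SimpleGraph V) (n : ℕ) : ℕ :=
  sInf {s : ℕ | Even s ∧ ∀ π : List ℕ, π.length = n → π.Pairwise (· ≥ ·) →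
      IsGraphic π → s ≤ π.sum → PotentiallyGraphic H π}

/-- The maximum degree `Δ(G)` of a finite graph. -/
noncomputable def maxDeg {V : Type*} [Fintype V] (G : SimpleGraph V) : ℕ :=
  Finset.univ.sup (gdeg G)

/-- The independence number `α(G)`. -/
noncomputable def indepNum {V : Type*} [Fintype V] (G : SimpleGraph V) : ℕ :=
  sSup {k | ∃ s : Finset V, s.card = k ∧ (s : Set V).Pairwise fun a b => ¬ G.Adj a b}

/-- `∇_i(H)`: the minimum of `Δ(F)` over induced subgraphs `F` of `H` of order `i`. -/
noncomputable def nabla {V : Type*} [Fintype V] (H : SimpleGraph V) (i : ℕ) : ℕ :=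
  sInf {d | ∃ s : Finset V, s.card = i ∧ maxDeg (SimpleGraph.induce (s : Set V) H) = d}

/-- The sequence `π̃_i(H,n) = ((n-1)^{k-i}, (k-i+∇_i(H)-1)^{n-k+i})`, with the last
term reduced by one if the sum would otherwise be odd. -/
noncomputable def tildePi {V : Type*} [Fintype V] (H : SimpleGraph V) (i n : ℕ) : List ℕ :=
  let k := Fintype.card V
  let d := k - i + nabla H i - 1
  let base := List.replicate (k - i) (n - 1) ++ List.replicate (n - k + i) d
  if Even base.sum then base else base.dropLast ++ [d - 1]

/-- `σ̃_i(H) = 2(k-i) + ∇_i(H) - 1`. -/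
noncomputable def sigmaTildeI {V : Type*} [Fintype V] (H : SimpleGraph V) (i : ℕ) : ℕ :=
  2 * (Fintype.card V - i) + nabla H i - 1

/-- `σ̃(H) = max_{α(H)+1 ≤ i ≤ k} σ̃_i(H)`. -/
noncomputable def sigmaTilde {V : Type*} [Fintype V] (H : SimpleGraph V) : ℕ :=
  (Finset.Icc (_root_.indepNum H + 1) (Fintype.card V)).sup (sigmaTildeI H)

/-- The family `P(H,n)` of extremal nonrealizing sequences. -/
noncomputable def potSet {V : Type*} [Fintype V] (H : SimpleGraph V) (n : ℕ) : Set (List ℕ) :=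
  {π | ∃ i ∈ Finset.Icc (_root_.indepNum H + 1) (Fintype.card V),
      sigmaTildeI H i = sigmaTilde H ∧ π = tildePi H i n}

/-- `i*(H)`: the least index `i ∈ {α(H)+1, …, k}` with `σ̃_i(H) = σ̃(H)`. -/
noncomputable def iStar {V : Type*} [Fintype V] (H : SimpleGraph V) : ℕ :=
  sInf {i | i ∈ Finset.Icc (_root_.indepNum H + 1) (Fintype.card V) ∧ sigmaTildeI H i = sigmaTilde H}

/-- `‖π₁ - π₂‖ = Σ_j |x_j - y_j|`, padding the shorter sequence with zeros. -/
def seqDist (π₁ π₂ : List ℕ) : ℕ :=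
  ((List.range (max π₁.length π₂.length)).map fun j =>
    Nat.dist (π₁.getD j 0) (π₂.getD j 0)).sum

/-- `H` is stable with respect to the potential number (σ-stable). -/
def SigmaStable {V : Type*} [Fintype V] (H : SimpleGraph V) : Prop :=
  ∀ ε : ℝ, 0 < ε → ∃ δ : ℝ, 0 < δ ∧ ∃ n₀ : ℕ, ∀ n : ℕ, n₀ ≤ n →
    ∀ π : List ℕ, π.length = n → π.Pairwise (· ≥ ·) → IsGraphic π →
      ¬ PotentiallyGraphic H π →
      (potentialNumber H n : ℝ) - δ * n ≤ (π.sum : ℝ) →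
      ∃ π' ∈ potSet H n, (seqDist π π' : ℝ) < ε * n

/-- The nonincreasing degree sequence of a finite graph. -/
noncomputable def degList {V : Type*} [Fintype V] (G : SimpleGraph V) : List ℕ :=
  ((degMultiset G).sort (· ≤ ·)).reverse

/-- `π` is degree-sufficient for `H`: termwise, `π` dominates the nonincreasing
degree sequence of `H`. -/
def DegreeSufficient {V : Type*} [Fintype V] (H : SimpleGraph V) (π : List ℕ) : Prop :=
  Fintype.card V ≤ π.length ∧ ∀ i < Fintype.card V, (degList H).getD i 0 ≤ π.getD i 0

/-- `H` is weakly σ-stable. -/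
def WeaklySigmaStable {V : Type*} [Fintype V] (H : SimpleGraph V) : Prop :=
  ∀ ε : ℝ, 0 < ε → ∃ δ : ℝ, 0 < δ ∧ ∃ n₀ : ℕ, ∀ n : ℕ, n₀ ≤ n →
    ∀ π : List ℕ, π.length = n → π.Pairwise (· ≥ ·) → IsGraphic π →
      DegreeSufficient H π →
      ¬ PotentiallyGraphic H π →
      (potentialNumber H n : ℝ) - δ * n ≤ (π.sum : ℝ) →
      ∃ π' ∈ potSet H n, (seqDist π π' : ℝ) < ε * n

/-- The join `G ∨ H` of two graphs on disjoint vertex sets. -/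
def graphJoin {V : Type*} {W : Type*} (G : SimpleGraph V) (H : SimpleGraph W) :
    SimpleGraph (V ⊕ W) where
  Adj x y :=
    match x, y with
    | .inl a, .inl b => G.Adj a b
    | .inr a, .inr b => H.Adj a b
    | .inl _, .inr _ => True
    | .inr _, .inl _ => True
  symm := by
    constructor
    rintro (a | a) (b | b) h
    · exact G.symm.symm _ _ h
    · trivial
    · trivial
    · exact H.symm.symm _ _ h
  loopless := by
    constructor
    rintro (a | a) h
    · exact G.loopless.irrefl a h
    · exact H.loopless.irrefl a h

/-- The double star `S_{x,y}`: two adjacent centers (vertices `0` and `1`), with the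
first center adjacent to `x` leaves and the second to `y` leaves, so that the centers
have degrees `x+1` and `y+1`. -/
def doubleStar (x y : ℕ) : SimpleGraph (Fin (x + y + 2)) :=
  SimpleGraph.fromRel fun a b =>
    (a.val = 0 ∧ b.val = 1) ∨
    (a.val = 0 ∧ 2 ≤ b.val ∧ b.val < x + 2) ∨
    (a.val = 1 ∧ x + 2 ≤ b.val)

/-- Laying off the term at (0-based) position `i`: delete it and subtract one from
the `d_i` largest remaining terms. -/
def layOffAt (π : List ℕ) (i : ℕ) : List ℕ :=
  let d := π.getD i 0
  let rest := π.take i ++ π.drop (i + 1)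
  (rest.take d).map (· - 1) ++ rest.drop d

section AuxLayOff

variable {V W U : Type*}

lemma gdeg_comap_equiv [Fintype V] [Fintype W] (G : SimpleGraph V) (e : W ≃ V) (w : W) :
    gdeg (G.comap e) w = gdeg G (e w) := by
  unfold gdeg
  have h : {x | (G.comap e).Adj w x} = e ⁻¹' {x | G.Adj (e w) x} := rfl
  rw [h, ← Set.ncard_image_of_injective _ e.injective,
    Set.image_preimage_eq _ e.surjective]

lemma degMultiset_comap_equiv [Fintype V] [Fintype W] (G : SimpleGraph V) (e : W ≃ V) :
    degMultiset (G.comap e) = degMultiset G := by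
  unfold degMultiset
  have h1 : (Finset.univ.val.map (gdeg (G.comap e)))
      = Finset.univ.val.map (gdeg G ∘ e) := by
    refine Multiset.map_congr rfl fun x _ => ?_
    exact gdeg_comap_equiv G e x
  rw [h1, ← Multiset.map_map, Multiset.map_univ_val_equiv]

lemma containsSub_comap_equiv [Fintype V] [Fintype W] (H : SimpleGraph U)
    (G : SimpleGraph V) (e : W ≃ V) (h : ContainsSub H G) : ContainsSub H (G.comap e) := by
  obtain ⟨f, hf, hadj⟩ := h
  refine ⟨fun u => e.symm (f u), fun a b hab => hf (by simpa using congrArg e hab),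
    fun a b hab => ?_⟩
  show G.Adj (e (e.symm (f a))) (e (e.symm (f b)))
  simpa using hadj hab

lemma potentially_of_real [Fintype V] (π : List ℕ) (G : SimpleGraph V)
    (h : degMultiset G = (π : Multiset ℕ)) (H : SimpleGraph U)
    (hc : ContainsSub H G) : PotentiallyGraphic H π := by
  have hcard : π.length = Fintype.card V := by
    have := congrArg Multiset.card h
    simp only [degMultiset, Multiset.card_map, Multiset.coe_card] at this
    simpa [Finset.card_univ] using this.symm
  let e : Fin π.length ≃ V := Fintype.equivOfCardEq (by simpa using hcard)
  exact ⟨G.comap e, by rw [degMultiset_comap_equiv, h], containsSub_comap_equiv H G e hc⟩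

lemma dom_adj [Fintype V] (G : SimpleGraph V) (v : V)
    (h : gdeg G v = Fintype.card V - 1) (w : V) (hw : w ≠ v) : G.Adj v w := by
  classical
  have hsub : {x | G.Adj v x} ⊆ {v}ᶜ := by
    intro x hx
    simp only [Set.mem_compl_iff, Set.mem_singleton_iff]
    exact fun he => G.loopless.irrefl v (he ▸ hx)
  have hcompl : ({v}ᶜ : Set V).ncard = Fintype.card V - 1 := by
    classical
    rw [Set.ncard_eq_toFinset_card']
    simp [Set.toFinset_compl, Set.toFinset_singleton, Finset.card_compl]
  have heq : {x | G.Adj v x} = ({v}ᶜ : Set V) := by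
    refine Set.eq_of_subset_of_ncard_le hsub ?_ (Set.toFinite _)
    rw [hcompl]
    unfold gdeg at h
    omega
  have : w ∈ {x | G.Adj v x} := heq ▸ (by simpa using hw)
  exact this

lemma map_val_univ_subtype [Fintype V] [DecidableEq V] (v : V) :
    (Finset.univ.val.map (Subtype.val : {w : V // w ≠ v} → V)) = Finset.univ.val.erase v := by
  rw [Multiset.Nodup.ext
    (Multiset.Nodup.map Subtype.coe_injective Finset.univ.nodup)
    (Multiset.Nodup.erase v Finset.univ.nodup)]
  intro a
  rw [Multiset.Nodup.mem_erase_iff Finset.univ.nodup]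
  simp only [Multiset.mem_map, Finset.mem_val, Finset.mem_univ, true_and, and_true]
  constructor
  · rintro ⟨x, _, rfl⟩; exact x.2
  · intro ha; exact ⟨⟨a, ha⟩, rfl⟩

lemma gdeg_delete [Fintype V] [DecidableEq V] (G : SimpleGraph V) (v : V)
    (hdom : ∀ w, w ≠ v → G.Adj v w) (w : {x : V // x ≠ v}) :
    gdeg (G.comap (Subtype.val : {x : V // x ≠ v} → V)) w + 1 = gdeg G w.val := by
  unfold gdeg
  have himg : (Subtype.val : {x : V // x ≠ v} → V) '' {x | (G.comap Subtype.val).Adj w x}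
      = {x | G.Adj w.val x} \ {v} := by
    ext x
    simp only [Set.mem_image, Set.mem_setOf_eq, Set.mem_diff, Set.mem_singleton_iff,
      SimpleGraph.comap_adj]
    constructor
    · rintro ⟨y, hy, rfl⟩; exact ⟨hy, y.2⟩
    · rintro ⟨hx, hxv⟩; exact ⟨⟨x, hxv⟩, hx, rfl⟩
  have h1 : {x | (G.comap (Subtype.val : {x : V // x ≠ v} → V)).Adj w x}.ncard
      = ({x | G.Adj w.val x} \ {v}).ncard := by
    rw [← himg, Set.ncard_image_of_injective _ Subtype.coe_injective]
  rw [h1]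
  exact Set.ncard_diff_singleton_add_one ((hdom w.val w.2).symm : G.Adj w.val v)
    (Set.toFinite _)

lemma degMultiset_delete [Fintype V] [DecidableEq V] (G : SimpleGraph V) (v : V)
    (hdom : ∀ w, w ≠ v → G.Adj v w) (m : Multiset ℕ)
    (hdm : degMultiset G = gdeg G v ::ₘ m) :
    degMultiset (G.comap (Subtype.val : {x : V // x ≠ v} → V)) = m.map (· - 1) := by
  classical
  have hu : (Finset.univ : Finset V).val = v ::ₘ Finset.univ.val.erase v :=
    (Multiset.cons_erase (Finset.mem_univ v)).symm
  have key : degMultiset G = gdeg G v ::ₘ (Finset.univ.val.erase v).map (gdeg G) := by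
    unfold degMultiset
    conv_lhs => rw [hu]
    rw [Multiset.map_cons]
  have hm : (Finset.univ.val.erase v).map (gdeg G) = m :=
    (Multiset.cons_inj_right _).mp (key.symm.trans hdm)
  unfold degMultiset
  have step : Finset.univ.val.map (gdeg (G.comap (Subtype.val : {x : V // x ≠ v} → V)))
      = Finset.univ.val.map (fun x : {x : V // x ≠ v} => gdeg G x.val - 1) := by
    refine Multiset.map_congr rfl fun x _ => ?_
    have := gdeg_delete G v hdom x
    omega
  rw [step]
  have : (fun x : {x : V // x ≠ v} => gdeg G x.val - 1)
      = (· - 1) ∘ (gdeg G) ∘ (Subtype.val) := rfl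
  rw [this, ← Multiset.map_map, ← Multiset.map_map, map_val_univ_subtype, hm]

lemma realdel [Fintype V] [DecidableEq V] (G : SimpleGraph V) (v : V) (t : List ℕ)
    (hdm : degMultiset G = (Fintype.card V - 1) ::ₘ (t : Multiset ℕ))
    (hv : gdeg G v = Fintype.card V - 1)
    (H : SimpleGraph U) (f : U → V) (hf : Function.Injective f)
    (hfv : ∀ u, f u ≠ v) (hadj : ∀ ⦃a b⦄, H.Adj a b → G.Adj (f a) (f b)) :
    PotentiallyGraphic H (t.map (· - 1)) := by
  classical
  have hdom : ∀ w, w ≠ v → G.Adj v w := dom_adj G v hv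
  have hdel : degMultiset (G.comap (Subtype.val : {x : V // x ≠ v} → V))
      = (t : Multiset ℕ).map (· - 1) :=
    degMultiset_delete G v hdom _ (by rw [hdm, hv])
  refine potentially_of_real _ (G.comap (Subtype.val : {x : V // x ≠ v} → V)) ?_ H ?_
  · rw [hdel]; simp [Multiset.map_coe]
  · refine ⟨fun u => ⟨f u, hfv u⟩, fun a b hab => hf (by simpa using hab),
      fun a b hab => ?_⟩
    exact hadj hab

lemma gdeg_join_inl [Fintype W] (G : SimpleGraph W) (a : Fin 1) :
    gdeg (graphJoin (⊤ : SimpleGraph (Fin 1)) G) (Sum.inl a) = Fintype.card W := by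
  unfold gdeg
  have h : {x | (graphJoin (⊤ : SimpleGraph (Fin 1)) G).Adj (Sum.inl a) x}
      = Set.range Sum.inr := by
    ext x
    cases x with
    | inl b =>
      have hb : b = a := Subsingleton.elim b a
      subst hb
      simp only [Set.mem_setOf_eq, Set.mem_range]
      constructor
      · intro h; exact absurd h ((graphJoin (⊤ : SimpleGraph (Fin 1)) G).loopless.irrefl _)
      · rintro ⟨y, hy⟩; exact absurd hy (by simp)
    | inr b =>
      simp only [Set.mem_setOf_eq, Set.mem_range]
      exact ⟨fun _ => ⟨b, rfl⟩, fun _ => trivial⟩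
  rw [h, ← Set.image_univ, Set.ncard_image_of_injective _ Sum.inr_injective,
    Set.ncard_univ, Nat.card_eq_fintype_card]

lemma gdeg_join_inr [Fintype W] (G : SimpleGraph W) (w : W) :
    gdeg (graphJoin (⊤ : SimpleGraph (Fin 1)) G) (Sum.inr w) = gdeg G w + 1 := by
  unfold gdeg
  have h : {x | (graphJoin (⊤ : SimpleGraph (Fin 1)) G).Adj (Sum.inr w) x}
      = insert (Sum.inl 0) (Sum.inr '' {y | G.Adj w y}) := by
    ext x
    cases x with
    | inl b =>
      have hb : b = 0 := Subsingleton.elim b 0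
      subst hb
      simp only [Set.mem_setOf_eq, Set.mem_insert_iff, Set.mem_image]
      constructor
      · intro _; exact Or.inl trivial
      · intro _; trivial
    | inr b =>
      simp only [Set.mem_setOf_eq, Set.mem_insert_iff, Set.mem_image]
      constructor
      · intro h; exact Or.inr ⟨b, h, rfl⟩
      · rintro (h | ⟨y, hy, he⟩)
        · exact absurd h (by simp)
        · cases Sum.inr_injective he; exact hy
  rw [h, Set.ncard_insert_of_notMem (by simp) (Set.toFinite _),
    Set.ncard_image_of_injective _ Sum.inr_injective]

lemma degMultiset_join [Fintype W] (G : SimpleGraph W) :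
    degMultiset (graphJoin (⊤ : SimpleGraph (Fin 1)) G)
      = (Fintype.card W) ::ₘ (degMultiset G).map (· + 1) := by
  unfold degMultiset
  rw [← Finset.univ_disjSum_univ, Finset.val_disjSum, Multiset.disjSum, Multiset.map_add,
    Multiset.map_map, Multiset.map_map, Multiset.map_map]
  have h1 : ((Finset.univ : Finset (Fin 1)).val.map
      (gdeg (graphJoin (⊤ : SimpleGraph (Fin 1)) G) ∘ Sum.inl)) = {Fintype.card W} := by
    have : (Finset.univ : Finset (Fin 1)) = {0} := by
      ext x; simp [Subsingleton.elim x 0]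
    rw [this]
    simp [gdeg_join_inl]
  have h2 : ((Finset.univ : Finset W).val.map
      (gdeg (graphJoin (⊤ : SimpleGraph (Fin 1)) G) ∘ Sum.inr))
      = (Finset.univ : Finset W).val.map ((· + 1) ∘ gdeg G) := by
    refine Multiset.map_congr rfl fun x _ => ?_
    exact gdeg_join_inr G x
  rw [h1, h2, ← Multiset.map_map, Multiset.singleton_add]

lemma realjoin {V : Type*} [Fintype V] (G₁ : SimpleGraph V) (t : List ℕ)
    (hdm : degMultiset G₁ = Multiset.map (· - 1) (t : Multiset ℕ))
    (htpos : ∀ x ∈ t, 1 ≤ x)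
    {W : Type*} (G : SimpleGraph W) (hc : ContainsSub G G₁) :
    PotentiallyGraphic (graphJoin (⊤ : SimpleGraph (Fin 1)) G) (t.length :: t) := by
  have hcard : Fintype.card V = t.length := by
    have := congrArg Multiset.card hdm
    simpa [degMultiset, Finset.card_univ] using this
  refine potentially_of_real _ (graphJoin (⊤ : SimpleGraph (Fin 1)) G₁) ?_ _ ?_
  · rw [degMultiset_join, hdm, hcard, Multiset.map_map]
    have : Multiset.map ((· + 1) ∘ (· - 1)) (t : Multiset ℕ) = (t : Multiset ℕ) := by
      rw [show (t : Multiset ℕ) = Multiset.map id (t : Multiset ℕ) by simp]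
      rw [Multiset.map_map]
      refine Multiset.map_congr rfl fun x hx => ?_
      have := htpos x (by simpa using hx)
      simp only [Function.comp_apply, id]
      omega
    rw [this]
    rfl
  · obtain ⟨f, hf, hadj⟩ := hc
    refine ⟨Sum.map id f, Function.Injective.sumMap Function.injective_id hf, ?_⟩
    rintro (a | a) (b | b) h
    · exact h
    · trivial
    · trivial
    · exact hadj h

end AuxLayOff

/-- **Laying off a dominating term.** If `π = (n−1, d₂, …, d_n)` is a nonincreasing graphic
sequence and `π₁ = (d₂−1, …, d_n−1)`, then `π₁` is potentially `G`-graphic iff `π` is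
potentially `(K₁ ∨ G)`-graphic; consequently `π` is potentially `H`-graphic iff `π₁` is
potentially `D⁽¹⁾(H)`-graphic. -/

theorem layOffDominating (n : ℕ) (hn : 1 ≤ n) (π : List ℕ) (hlen : π.length = n)
    (hsorted : π.Pairwise (· ≥ ·)) (hgraphic : IsGraphic π)
    (hhead : π.getD 0 0 = n - 1) :
    (∀ {W : Type} [Fintype W] (G : SimpleGraph W),
        PotentiallyGraphic G ((π.drop 1).map (· - 1)) ↔
          PotentiallyGraphic (graphJoin (⊤ : SimpleGraph (Fin 1)) G) π) ∧
    (∀ {U : Type} [Fintype U] (H : SimpleGraph U),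
        PotentiallyGraphic H π ↔
          ∃ s : Finset U, s.card = Fintype.card U - 1 ∧
            PotentiallyGraphic (SimpleGraph.induce (s : Set U) H)
              ((π.drop 1).map (· - 1))) := by
  subst hlen
  cases π with
  | nil => simp at hn
  | cons d t =>
  classical
  have hhead' : d = t.length := by simpa using hhead
  subst hhead'
  obtain ⟨G₀, hG₀⟩ := hgraphic
  have hc1 : Fintype.card (Fin ((t.length :: t).length)) - 1 = t.length := by simp
  have hG₀' : degMultiset G₀ = (t.length : ℕ) ::ₘ (t : Multiset ℕ) := by
    rw [hG₀, Multiset.cons_coe]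
  obtain ⟨v₀, hv₀⟩ : ∃ v, gdeg G₀ v = t.length := by
    have h : (t.length : ℕ) ∈ degMultiset G₀ := by
      rw [hG₀']; exact Multiset.mem_cons_self _ _
    obtain ⟨v, _, hv⟩ := Multiset.mem_map.mp h
    exact ⟨v, hv⟩
  have htpos : ∀ x ∈ t, 1 ≤ x := by
    intro x hx
    have hmem : x ∈ degMultiset G₀ := by
      rw [hG₀']; exact Multiset.mem_cons_of_mem (by exact_mod_cast hx)
    obtain ⟨w, _, hw⟩ := Multiset.mem_map.mp hmem
    by_cases hwv : w = v₀
    · subst hwv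
      have ht : t ≠ [] := List.ne_nil_of_mem hx
      have : 1 ≤ t.length := List.length_pos_iff.mpr ht
      omega
    · have hadj : G₀.Adj w v₀ := (dom_adj G₀ v₀ (by rw [hv₀, hc1]) w hwv).symm
      have hnon : {z | G₀.Adj w z}.Nonempty := ⟨v₀, hadj⟩
      have hpos := (Set.ncard_pos (Set.toFinite _)).mpr hnon
      unfold gdeg at hw
      omega
  have part1 : ∀ {W : Type} [Fintype W] (G : SimpleGraph W),
      PotentiallyGraphic G (((t.length :: t).drop 1).map (· - 1)) ↔
        PotentiallyGraphic (graphJoin (⊤ : SimpleGraph (Fin 1)) G) (t.length :: t) := by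
    intro W _ G
    constructor
    · rintro ⟨G₁, h₁, hc⟩
      have h₁' : degMultiset G₁ = Multiset.map (· - 1) (t : Multiset ℕ) := by
        rw [h₁]
        simp [Multiset.map_coe]
      exact realjoin G₁ t h₁' htpos G hc
    · rintro ⟨G', h', f, hf, hadj⟩
      obtain ⟨v, hv⟩ : ∃ v, gdeg G' v = t.length := by
        have h : (t.length : ℕ) ∈ degMultiset G' := by
          rw [h', ← Multiset.cons_coe]; exact Multiset.mem_cons_self _ _
        obtain ⟨v, _, hv⟩ := Multiset.mem_map.mp h
        exact ⟨v, hv⟩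
      have hvcard : gdeg G' v = Fintype.card (Fin ((t.length :: t).length)) - 1 := by
        rw [hv, hc1]
      have hdom := dom_adj G' v hvcard
      have hdm' : degMultiset G'
          = (Fintype.card (Fin ((t.length :: t).length)) - 1) ::ₘ (t : Multiset ℕ) := by
        rw [h', ← Multiset.cons_coe, hc1]
      set u := f (Sum.inl 0) with hu
      set f' : Fin 1 ⊕ W → Fin ((t.length :: t).length) :=
        fun x => Equiv.swap u v (f x) with hf'
      have hinj' : Function.Injective f' := (Equiv.swap u v).injective.comp hf
      have hf'0 : f' (Sum.inl 0) = v := by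
        simp only [hf', ← hu, Equiv.swap_apply_left]
      have hne : ∀ w : W, f' (Sum.inr w) ≠ v := by
        intro w he
        have h2 : (Sum.inr w : Fin 1 ⊕ W) = Sum.inl 0 := hinj' (he.trans hf'0.symm)
        simp at h2
      have hadj' : ∀ a b : W, G.Adj a b → G'.Adj (f' (Sum.inr a)) (f' (Sum.inr b)) := by
        intro a b hab
        have h0 : G'.Adj (f (Sum.inr a)) (f (Sum.inr b)) :=
          hadj (show (graphJoin (⊤ : SimpleGraph (Fin 1)) G).Adj (Sum.inr a) (Sum.inr b)
            from hab)
        have hAu : f (Sum.inr a) ≠ u := fun h => by simpa using hf h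
        have hBu : f (Sum.inr b) ≠ u := fun h => by simpa using hf h
        show G'.Adj (Equiv.swap u v (f (Sum.inr a))) (Equiv.swap u v (f (Sum.inr b)))
        by_cases hA : f (Sum.inr a) = v
        · have hBv : f (Sum.inr b) ≠ v := by
            intro h
            have : (Sum.inr a : Fin 1 ⊕ W) = Sum.inr b := hf (hA.trans h.symm)
            exact hab.ne (by simpa using this)
          rw [hA, Equiv.swap_apply_right, Equiv.swap_apply_of_ne_of_ne hBu hBv]
          exact hadj (show (graphJoin (⊤ : SimpleGraph (Fin 1)) G).Adj
            (Sum.inl 0) (Sum.inr b) from trivial)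
        · by_cases hB : f (Sum.inr b) = v
          · rw [hB, Equiv.swap_apply_right, Equiv.swap_apply_of_ne_of_ne hAu hA]
            exact (hadj (show (graphJoin (⊤ : SimpleGraph (Fin 1)) G).Adj
              (Sum.inl 0) (Sum.inr a) from trivial)).symm
          · rw [Equiv.swap_apply_of_ne_of_ne hAu hA, Equiv.swap_apply_of_ne_of_ne hBu hB]
            exact h0
      exact realdel G' v t hdm' hvcard G (fun w => f' (Sum.inr w))
        (fun a b h => by simpa using hinj' h) hne (fun a b hab => hadj' a b hab)
  refine ⟨part1, ?_⟩
  intro U _ H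
  constructor
  · rintro ⟨G', h', f, hf, hadj⟩
    obtain ⟨v, hv⟩ : ∃ v, gdeg G' v = t.length := by
      have h : (t.length : ℕ) ∈ degMultiset G' := by
        rw [h', ← Multiset.cons_coe]; exact Multiset.mem_cons_self _ _
      obtain ⟨v, _, hv⟩ := Multiset.mem_map.mp h
      exact ⟨v, hv⟩
    have hvcard : gdeg G' v = Fintype.card (Fin ((t.length :: t).length)) - 1 := by
      rw [hv, hc1]
    have hdm' : degMultiset G'
        = (Fintype.card (Fin ((t.length :: t).length)) - 1) ::ₘ (t : Multiset ℕ) := by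
      rw [h', ← Multiset.cons_coe, hc1]
    rcases isEmpty_or_nonempty U with hU | hU
    · haveI := hU
      refine ⟨∅, by simp, ?_⟩
      exact realdel G' v t hdm' hvcard _ (fun x => isEmptyElim x.1)
        (fun a b _ => isEmptyElim a.1) (fun x => isEmptyElim x.1)
        (fun a b _ => isEmptyElim a.1)
    · haveI := hU
      obtain ⟨u0, hu0⟩ : ∃ u0 : U, ∀ x, x ≠ u0 → f x ≠ v := by
        by_cases hv' : ∃ u, f u = v
        · obtain ⟨u0, h0⟩ := hv'
          exact ⟨u0, fun x hx he => hx (hf (he.trans h0.symm))⟩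
        · exact ⟨Classical.arbitrary U, fun x _ he => hv' ⟨x, he⟩⟩
      refine ⟨Finset.univ.erase u0,
        by simp [Finset.card_erase_of_mem], ?_⟩
      refine realdel G' v t hdm' hvcard _ (fun x => f x.1) ?_ ?_ ?_
      · intro a b h
        exact Subtype.ext (hf h)
      · intro x
        refine hu0 _ ?_
        have h2 := x.2
        simp only [Finset.coe_erase, Set.mem_diff, Set.mem_singleton_iff] at h2
        exact h2.2
      · intro a b h
        exact hadj h
  · rintro ⟨s, hs, hps⟩
    have hpot := (part1 (SimpleGraph.induce (s : Set U) H)).mp hps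
    obtain ⟨G', h', f, hf, hadj⟩ := hpot
    rcases isEmpty_or_nonempty U with hU | hU
    · haveI := hU
      exact ⟨G₀, hG₀, fun u => isEmptyElim u, fun a b _ => isEmptyElim a,
        fun a b _ => isEmptyElim a⟩
    · haveI := hU
      classical
      have hsc : ∀ u ∉ s, ∀ u' ∉ s, u = u' := by
        have hcompl : sᶜ.card = 1 := by
          rw [Finset.card_compl, hs]
          have h1 : 1 ≤ Fintype.card U := Fintype.card_pos
          have h2 : s.card ≤ Fintype.card U := s.card_le_univ
          omega
        intro u hu u' hu'
        exact Finset.card_le_one.mp hcompl.le u (by simpa using hu) u' (by simpa using hu')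
      set g : U → Fin ((t.length :: t).length) :=
        fun u => if h : u ∈ s then f (Sum.inr ⟨u, Finset.mem_coe.mpr h⟩)
          else f (Sum.inl 0) with hg
      have hga : ∀ a (h : a ∈ s), g a = f (Sum.inr ⟨a, Finset.mem_coe.mpr h⟩) :=
        fun a h => dif_pos h
      have hgb : ∀ a, a ∉ s → g a = f (Sum.inl 0) := fun a h => dif_neg h
      refine ⟨G', h', g, ?_, ?_⟩
      · intro a b hab
        by_cases ha : a ∈ s <;> by_cases hb : b ∈ s
        · rw [hga a ha, hga b hb] at hab
          have := hf hab
          simpa using this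
        · rw [hga a ha, hgb b hb] at hab
          exact absurd (hf hab) (by simp)
        · rw [hgb a ha, hga b hb] at hab
          exact absurd (hf hab) (by simp)
        · exact hsc a ha b hb
      · intro a b hab
        by_cases ha : a ∈ s <;> by_cases hb : b ∈ s
        · rw [hga a ha, hga b hb]
          exact hadj (show (graphJoin (⊤ : SimpleGraph (Fin 1))
            (SimpleGraph.induce (s : Set U) H)).Adj
            (Sum.inr ⟨a, Finset.mem_coe.mpr ha⟩) (Sum.inr ⟨b, Finset.mem_coe.mpr hb⟩)
            from hab)
        · rw [hga a ha, hgb b hb]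
          exact hadj (show (graphJoin (⊤ : SimpleGraph (Fin 1))
            (SimpleGraph.induce (s : Set U) H)).Adj
            (Sum.inr ⟨a, Finset.mem_coe.mpr ha⟩) (Sum.inl 0) from trivial)
        · rw [hgb a ha, hga b hb]
          exact hadj (show (graphJoin (⊤ : SimpleGraph (Fin 1))
            (SimpleGraph.induce (s : Set U) H)).Adj
            (Sum.inl 0) (Sum.inr ⟨b, Finset.mem_coe.mpr hb⟩) from trivial)
        · exact absurd (hsc a ha b hb) hab.ne
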